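/- Let Y be a topological vector space, C ⊂ Y a non-trivial closed convex pointed cone, k ∈ core C, and a ∈ Y. Let ‖·‖_{C,k} be the Minkowski functional of the order interval [-k,k]_C = (C - k) ∩ (k - C), which is a norm. Then ‖y - a‖_{C,k} = φ_{a-C,k}(y) for all y ∈ a + C. -/

import Mathlib

open Set Pointwise

noncomputable def phiF {Y : Type*} [AddCommGroup Y] [Module ℝ Y] (A : Set Y) (k : Y) (y : Y) : EReal :=
  sInf ((fun t : ℝ => (t : EReal)) '' {t : ℝ | y - t • k ∈ A})

def recCone {Y : Type*} [AddCommGroup Y] [Module ℝ Y] (A : Set Y) : Set Y :=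
  {u | ∀ a ∈ A, ∀ t : ℝ, 0 ≤ t → a + t • u ∈ A}

def algInterior {Y : Type*} [AddCommGroup Y] [Module ℝ Y] (C : Set Y) : Set Y :=
  {x ∈ C | ∀ y : Y, ∃ ε : ℝ, 0 < ε ∧ ∀ t : ℝ, 0 ≤ t → t ≤ ε → x + t • y ∈ C}

theorem stmt_19 {Y : Type*} [AddCommGroup Y] [Module ℝ Y] [TopologicalSpace Y]
    [IsTopologicalAddGroup Y] [ContinuousSMul ℝ Y]
    (C : Set Y) (hCc : IsClosed C) (hCcv : Convex ℝ C)
    (hcone : ∀ c : ℝ, 0 ≤ c → ∀ x ∈ C, c • x ∈ C)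
    (hpointed : ∀ x ∈ C, -x ∈ C → x = 0)
    (hnt₁ : C ≠ {0}) (hnt₂ : C ≠ Set.univ)
    (k : Y) (hkcore : k ∈ algInterior C) (a : Y) :
    ∀ y : Y, y - a ∈ C →
      ((gauge {z : Y | z + k ∈ C ∧ k - z ∈ C} (y - a) : ℝ) : EReal) =
        phiF ((fun c => a - c) '' C) k y := by
  intro y hy
  set x := y - a with hx
  -- basic facts about C
  have h0C : (0 : Y) ∈ C := by
    have := hcone 0 le_rfl _ hy; simpa using this
  have hadd : ∀ u ∈ C, ∀ v ∈ C, u + v ∈ C := by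
    intro u hu v hv
    have h := hCcv hu hv (by norm_num : (0:ℝ) ≤ 1/2) (by norm_num : (0:ℝ) ≤ 1/2)
      (by norm_num)
    have h2 := hcone 2 (by norm_num) _ h
    have : (2:ℝ) • ((1/2:ℝ) • u + (1/2:ℝ) • v) = u + v := by
      rw [smul_add, smul_smul, smul_smul]; norm_num
    rwa [this] at h2
  have hkC : k ∈ C := hkcore.1
  have hkne : k ≠ 0 := by
    intro hk0
    apply hnt₂
    ext z
    simp only [Set.mem_univ, iff_true]
    obtain ⟨ε, hε, hεt⟩ := hkcore.2 z
    have h1 : k + ε • z ∈ C := hεt ε hε.le le_rfl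
    rw [hk0, zero_add] at h1
    have := hcone ε⁻¹ (by positivity) _ h1
    rwa [smul_smul, inv_mul_cancel₀ hε.ne', one_smul] at this
  -- the set S
  set S : Set ℝ := {t : ℝ | t • k - x ∈ C} with hS
  have hSne : S.Nonempty := by
    obtain ⟨ε, hε, hεt⟩ := hkcore.2 (-x)
    have h1 : k + ε • (-x) ∈ C := hεt ε hε.le le_rfl
    have h2 := hcone ε⁻¹ (by positivity) _ h1
    refine ⟨ε⁻¹, ?_⟩
    have : ε⁻¹ • (k + ε • (-x)) = ε⁻¹ • k - x := by
      rw [smul_add, smul_smul, inv_mul_cancel₀ hε.ne', one_smul]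
      abel
    rw [this] at h2
    exact h2
  have hSpos : ∀ t ∈ S, 0 ≤ t := by
    intro t ht
    by_contra hlt
    push_neg at hlt
    have htk : t • k ∈ C := by
      have := hadd _ ht _ hy
      simpa [hx] using this
    have hnegk : -k ∈ C := by
      have := hcone (-t⁻¹) (by rw [neg_nonneg]; exact inv_nonpos.2 hlt.le) _ htk
      rwa [smul_smul, neg_mul, inv_mul_cancel₀ hlt.ne, neg_smul, one_smul] at this
    exact hkne (hpointed k hkC hnegk)
  have hSup : ∀ t ∈ S, ∀ s, t ≤ s → s ∈ S := by
    intro t ht s hts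
    have h1 : (s - t) • k ∈ C := hcone _ (by linarith) _ hkC
    have h2 := hadd _ ht _ h1
    have : t • k - x + (s - t) • k = s • k - x := by
      rw [sub_smul]; abel
    rwa [this] at h2
  have hSc : IsClosed S := by
    have : Continuous fun t : ℝ => t • k - x := by continuity
    exact hCc.preimage this
  have hSbdd : BddBelow S := ⟨0, hSpos⟩
  set m := sInf S with hm
  have hmS : m ∈ S := hSc.csInf_mem hSne hSbdd
  have hm0 : 0 ≤ m := hSpos m hmS
  have hSIci : S = Set.Ici m := by
    ext t
    constructor
    · intro ht; exact csInf_le hSbdd ht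
    · intro ht; exact hSup m hmS t ht
  -- compute the RHS
  have hsetr : {t : ℝ | y - t • k ∈ (fun c => a - c) '' C} = S := by
    ext t
    simp only [Set.mem_image, Set.mem_setOf_eq, hS]
    constructor
    · rintro ⟨c, hc, hac⟩
      have h' : c = a - (y - t • k) := by rw [← hac]; abel
      have h'' : t • k - x = c := by rw [h']; show t • k - (y - a) = _; abel
      rwa [h'']
    · intro ht
      refine ⟨t • k - x, ht, ?_⟩
      show a - (t • k - (y - a)) = y - t • k
      abel
  have hrhs : phiF ((fun c => a - c) '' C) k y = (m : EReal) := by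
    rw [phiF, hsetr]
    apply le_antisymm
    · exact sInf_le ⟨m, hmS, rfl⟩
    · refine le_sInf ?_
      rintro b ⟨t, ht, rfl⟩
      show (m : EReal) ≤ (t : EReal)
      exact_mod_cast csInf_le hSbdd ht
  rw [hrhs]
  norm_cast
  -- compute the gauge
  have hgset : {r : ℝ | r ∈ Set.Ioi 0 ∧ r⁻¹ • x ∈ {z : Y | z + k ∈ C ∧ k - z ∈ C}} =
      {r : ℝ | 0 < r} ∩ S := by
    ext t
    simp only [Set.mem_setOf_eq, Set.mem_inter_iff, Set.mem_Ioi]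
    constructor
    · rintro ⟨htpos, -, h2⟩
      refine ⟨htpos, ?_⟩
      have := hcone t htpos.le _ h2
      rwa [smul_sub, smul_smul, mul_inv_cancel₀ htpos.ne', one_smul] at this
    · rintro ⟨htpos, htS⟩
      refine ⟨htpos, hadd _ (hcone t⁻¹ (by positivity) _ hy) _ hkC, ?_⟩
      have := hcone t⁻¹ (by positivity) _ htS
      rwa [smul_sub, smul_smul, inv_mul_cancel₀ htpos.ne', one_smul] at this
  rw [gauge_def', hgset, hSIci]
  rcases eq_or_lt_of_le hm0 with h | h
  · rw [← h]
    have : {r : ℝ | 0 < r} ∩ Set.Ici (0:ℝ) = Set.Ioi 0 := by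
      ext t
      simp only [Set.mem_inter_iff, Set.mem_setOf_eq, Set.mem_Ici, Set.mem_Ioi,
        and_iff_left_iff_imp]
      exact le_of_lt
    rw [this, csInf_Ioi]
  · have : {r : ℝ | 0 < r} ∩ Set.Ici m = Set.Ici m := by
      ext t
      simp only [Set.mem_inter_iff, Set.mem_setOf_eq, Set.mem_Ici, and_iff_right_iff_imp]
      intro ht; linarith
    rw [this, csInf_Ici]
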